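/- Assume r ≥ 1. For every complex matrix σ indexed by (Fin s → Fin 4): trace(Π * (|0^r⟩⟨0^r| ⊗ σ)) = trace(Π * (|0^r⟩⟨0^r| ⊗ σ₀)), where σ₀ := |0^s⟩⟨0^s| * σ * |0^s⟩⟨0^s| is the compression of σ onto the rank-one projector |0^s⟩⟨0^s|. -/

import Mathlib

open Matrix Kronecker

/-- Standard basis vector of a single block of `q` qudits, supported at the
constant function `fun _ => u`. -/
def basisVec (q : ℕ) (u : Fin 4) : (Fin q → Fin 4) → ℂ :=
  fun x => if x = (fun _ => u) then 1 else 0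

/-- Standard basis vector `|u^r, v^s⟩` of the two-block system, supported at
the pair of constant functions. -/
def basisVec2 (r s : ℕ) (u v : Fin 4) : ((Fin r → Fin 4) × (Fin s → Fin 4)) → ℂ :=
  fun x => if x = ((fun _ => u), (fun _ => v)) then 1 else 0

/-- The codespace projector `Π` on all `r + s` qudits. -/
noncomputable def codeProj2 (r s : ℕ) :
    Matrix ((Fin r → Fin 4) × (Fin s → Fin 4)) ((Fin r → Fin 4) × (Fin s → Fin 4)) ℂ :=
  (1/2 : ℂ) •
    ((∑ u ∈ ({0,1} : Finset (Fin 4)), ∑ v ∈ ({0,1} : Finset (Fin 4)),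
        vecMulVec (basisVec2 r s u u) (star (basisVec2 r s v v)))
      + (∑ u ∈ ({2,3} : Finset (Fin 4)), ∑ v ∈ ({2,3} : Finset (Fin 4)),
        vecMulVec (basisVec2 r s u u) (star (basisVec2 r s v v))))

lemma trace_outer {I : Type*} [Fintype I] [DecidableEq I] (a b : I) (M : Matrix I I ℂ) :
    (vecMulVec (fun x => if x = a then (1:ℂ) else 0)
      (star (fun x => if x = b then (1:ℂ) else 0)) * M).trace = M b a := by
  simp [Matrix.trace, Matrix.mul_apply, vecMulVec_apply, Pi.star_apply, apply_ite,
    Finset.sum_ite_eq', Matrix.diag, ite_mul, mul_ite]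

lemma key (r s : ℕ) (hr : 1 ≤ r) (σ : Matrix (Fin s → Fin 4) (Fin s → Fin 4) ℂ) :
    (codeProj2 r s * (vecMulVec (basisVec r 0) (star (basisVec r 0)) ⊗ₖ σ)).trace
    = (1/2 : ℂ) * σ (fun _ => 0) (fun _ => 0) := by
  have hc : ∀ v w : Fin 4, ((fun _ : Fin r => v) = (fun _ => w)) = (v = w) := fun v w => by
    simp only [eq_iff_iff]
    exact ⟨fun h => congrFun h ⟨0, hr⟩, fun h => by rw [h]⟩
  have hto : ∀ u v : Fin 4,
      (vecMulVec (basisVec2 r s u u) (star (basisVec2 r s v v)) *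
        (vecMulVec (basisVec r 0) (star (basisVec r 0)) ⊗ₖ σ)).trace
      = (vecMulVec (basisVec r 0) (star (basisVec r 0)) ⊗ₖ σ)
          ((fun _ => v), (fun _ => v)) ((fun _ => u), (fun _ => u)) := fun u v =>
    trace_outer _ _ _
  simp only [codeProj2, Matrix.smul_mul, Matrix.add_mul, Matrix.sum_mul, trace_smul,
    trace_add, Matrix.trace_sum, hto, kroneckerMap_apply, vecMulVec_apply, basisVec,
    Pi.star_apply, hc, smul_eq_mul]
  norm_num [Finset.sum_pair]
  intro h
  exact absurd h (by decide)

theorem trace_codeProj_compress (r s : ℕ) (hr : 1 ≤ r)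
    (σ : Matrix (Fin s → Fin 4) (Fin s → Fin 4) ℂ) :
    (codeProj2 r s * (vecMulVec (basisVec r 0) (star (basisVec r 0)) ⊗ₖ σ)).trace
    = (codeProj2 r s * (vecMulVec (basisVec r 0) (star (basisVec r 0)) ⊗ₖ
        (vecMulVec (basisVec s 0) (star (basisVec s 0)) * σ *
          vecMulVec (basisVec s 0) (star (basisVec s 0))))).trace := by
  rw [key r s hr, key r s hr]
  congr 1
  simp [Matrix.mul_apply, vecMulVec_apply, basisVec, Pi.star_apply, apply_ite,
    ite_mul, mul_ite, Finset.sum_ite_eq', Finset.mul_sum]
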